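/- arXiv:2008.11670 — 8 statements merged into one kernel-verified Lean document; each statement's English description precedes it below -/
import Mathlib

section
/- Let d ≥ 2 be an integer and let H = ∑_{i=0}^d (1-i)·e_i(x_1,…,x_d) be the polynomial in d real variables where e_i is the i-th elementary symmetric polynomial. Then: (a) for every i ∈ {1,…,d}, the second partial derivative ∂²H/∂x_i² is identically zero; and (b) for the point c = (1/(d-1),…,1/(d-1)) and any k pairwise distinct indices 1 ≤ i_1 < ⋯ < i_k ≤ d (1 ≤ k ≤ d), the iterated partial derivative satisfies -∂^k H/∂x_{i_1}⋯∂x_{i_k}(c) = k·(d/(d-1))^{d-k-1}. -/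
open Finset

namespace PDHaux

open MvPolynomial

variable {d : ℕ}

noncomputable def E (d : ℕ) (T : Finset (Fin d)) (m : ℕ) : MvPolynomial (Fin d) ℝ :=
  ∑ s ∈ T.powersetCard m, ∏ i ∈ s, X i

lemma E_zero (T : Finset (Fin d)) : E d T 0 = 1 := by
  simp [E]

lemma pderiv_prod_X (j : Fin d) (s : Finset (Fin d)) :
    pderiv j (∏ i ∈ s, (X i : MvPolynomial (Fin d) ℝ)) =
      if j ∈ s then ∏ i ∈ s.erase j, X i else 0 := by
  induction s using Finset.induction_on with
  | empty => simp
  | @insert a s ha ih =>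
    rw [Finset.prod_insert ha, pderiv_mul, ih]
    by_cases hja : j = a
    · subst hja
      rw [pderiv_X_self, if_neg ha, if_pos (Finset.mem_insert.mpr (Or.inl rfl)),
          Finset.erase_insert ha]
      ring
    · rw [pderiv_X_of_ne (fun h => hja h.symm)]
      by_cases hjs : j ∈ s
      · rw [if_pos hjs, if_pos (Finset.mem_insert.mpr (Or.inr hjs)),
            Finset.erase_insert_of_ne (fun h => hja h.symm),
            Finset.prod_insert (fun h => ha (Finset.mem_of_mem_erase h))]
        ring
      · rw [if_neg hjs, if_neg (by simp [hja, hjs])]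
        ring

lemma pderiv_E_not_mem {j : Fin d} {T : Finset (Fin d)} (hj : j ∉ T) (m : ℕ) :
    pderiv j (E d T m) = 0 := by
  rw [E, map_sum]
  refine Finset.sum_eq_zero fun s hs => ?_
  rw [pderiv_prod_X, if_neg]
  exact fun h => hj ((Finset.mem_powersetCard.mp hs).1 h)

lemma pderiv_E_mem {j : Fin d} {T : Finset (Fin d)} (hj : j ∈ T) (m : ℕ) :
    pderiv j (E d T (m + 1)) = E d (T.erase j) m := by
  rw [E, map_sum, E]
  rw [Finset.sum_congr rfl (fun s _ => pderiv_prod_X j s), Finset.sum_ite,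
      Finset.sum_const_zero, add_zero]
  refine Finset.sum_bij' (fun s _ => s.erase j) (fun s _ => insert j s) ?_ ?_ ?_ ?_ ?_
  · intro s hs
    simp only [Finset.mem_filter, Finset.mem_powersetCard] at hs
    rw [Finset.mem_powersetCard]
    refine ⟨fun x hx => Finset.mem_erase.mpr
      ⟨(Finset.mem_erase.mp hx).1, hs.1.1 (Finset.mem_of_mem_erase hx)⟩, ?_⟩
    rw [Finset.card_erase_of_mem hs.2, hs.1.2]; omega
  · intro s hs
    rw [Finset.mem_powersetCard] at hs
    have hjs : j ∉ s := fun h => (Finset.mem_erase.mp (hs.1 h)).1 rfl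
    simp only [Finset.mem_filter, Finset.mem_powersetCard]
    refine ⟨⟨fun x hx => ?_, ?_⟩, Finset.mem_insert_self _ _⟩
    · rcases Finset.mem_insert.mp hx with h | h
      · exact h ▸ hj
      · exact Finset.mem_of_mem_erase (hs.1 h)
    · rw [Finset.card_insert_of_notMem hjs, hs.2]
  · intro s hs
    simp only [Finset.mem_filter] at hs
    exact Finset.insert_erase hs.2
  · intro s hs
    rw [Finset.mem_powersetCard] at hs
    have hjs : j ∉ s := fun h => (Finset.mem_erase.mp (hs.1 h)).1 rfl
    exact Finset.erase_insert hjs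
  · intro s _
    rfl

lemma eval_E (T : Finset (Fin d)) (m : ℕ) (t : ℝ) :
    MvPolynomial.eval (fun _ : Fin d => t) (E d T m) = (T.card.choose m : ℝ) * t ^ m := by
  rw [E, map_sum]
  rw [Finset.sum_congr rfl (fun s hs => ?_), Finset.sum_const,
      Finset.card_powersetCard, nsmul_eq_mul]
  rw [map_prod]
  simp only [eval_X, Finset.prod_const]
  rw [(Finset.mem_powersetCard.mp hs).2]

lemma sum1 (n : ℕ) (x : ℝ) :
    ∑ m ∈ Finset.range (n + 1), (n.choose m : ℝ) * x ^ m = (x + 1) ^ n := by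
  rw [add_pow]
  refine Finset.sum_congr rfl fun m _ => ?_
  ring

lemma sum2 (n : ℕ) (x : ℝ) :
    ∑ m ∈ Finset.range (n + 1 + 1), (m : ℝ) * ((n + 1).choose m : ℝ) * x ^ m
      = ((n : ℝ) + 1) * x * (x + 1) ^ n := by
  rw [Finset.sum_range_succ']
  simp only [Nat.cast_zero, zero_mul, add_zero, pow_zero, mul_one]
  have h : ∀ j ∈ Finset.range (n + 1),
      ((j + 1 : ℕ) : ℝ) * ((n + 1).choose (j + 1) : ℝ) * x ^ (j + 1)
        = ((n : ℝ) + 1) * x * ((n.choose j : ℝ) * x ^ j) := by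
    intro j _
    have h0 := Nat.add_one_mul_choose_eq n j
    have h1 := congrArg (fun y : ℕ => (y : ℝ)) h0
    push_cast at h1 ⊢
    linear_combination (-(x ^ (j + 1))) * h1
  rw [Finset.sum_congr rfl h, ← Finset.mul_sum, sum1]

lemma key_arith (d k : ℕ) (hd : 2 ≤ d) (hk1 : 1 ≤ k) (hkd : k ≤ d) :
    - ∑ m ∈ Finset.range (d - k + 1),
        (((1 : ℝ) - k - m) * ((d - k).choose m : ℝ) * (1 / ((d : ℝ) - 1)) ^ m)
      = (k : ℝ) * ((d : ℝ) / ((d : ℝ) - 1)) ^ ((d : ℤ) - (k : ℤ) - 1) := by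
  have hd2 : (2 : ℝ) ≤ (d : ℝ) := by exact_mod_cast hd
  have hD1 : ((d : ℝ) - 1) ≠ 0 := by intro h; linarith
  have hD0 : ((d : ℝ)) ≠ 0 := by intro h; linarith
  have ht1 : 1 / ((d : ℝ) - 1) + 1 = (d : ℝ) / ((d : ℝ) - 1) := by
    field_simp
    ring
  rcases eq_or_lt_of_le hkd with h | h
  · -- k = d
    subst h
    simp only [Nat.sub_self, zero_add, Finset.range_one, Finset.sum_singleton,
      Nat.choose_self, Nat.cast_one, Nat.cast_zero, pow_zero, mul_one, sub_zero]
    rw [show (k : ℤ) - (k : ℤ) - 1 = -1 by ring, zpow_neg_one, inv_div]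
    field_simp
    ring
  · -- k < d
    obtain ⟨n, hn⟩ : ∃ n : ℕ, d - k = n + 1 := ⟨d - k - 1, by omega⟩
    have hzexp : (d : ℤ) - (k : ℤ) - 1 = (n : ℤ) := by omega
    have hnk : ((n : ℝ) + 1) = (d : ℝ) - (k : ℝ) := by
      have : ((n : ℕ) : ℝ) + 1 = ((n + 1 : ℕ) : ℝ) := by push_cast; ring
      rw [this, ← hn]
      have : ((d - k : ℕ) : ℝ) = (d : ℝ) - (k : ℝ) := by
        push_cast [Nat.cast_sub hkd]; ring
      rw [this]
    rw [hzexp, zpow_natCast, hn]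
    have split : ∀ m : ℕ, ((1 : ℝ) - k - m) * (((n + 1).choose m : ℝ)) * (1 / ((d : ℝ) - 1)) ^ m
        = ((1 : ℝ) - k) * (((n + 1).choose m : ℝ) * (1 / ((d : ℝ) - 1)) ^ m)
          - (m : ℝ) * ((n + 1).choose m : ℝ) * (1 / ((d : ℝ) - 1)) ^ m := by
      intro m; ring
    rw [Finset.sum_congr rfl (fun m _ => split m), Finset.sum_sub_distrib,
        ← Finset.mul_sum, sum1 (n + 1) (1 / ((d : ℝ) - 1)), sum2 n (1 / ((d : ℝ) - 1)),
        pow_succ, ht1, hnk]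
    set y := ((d : ℝ) / ((d : ℝ) - 1)) ^ n with hy
    field_simp
    ring

end PDHaux

/-- **Partial derivatives of `H = ∑_{i=0}^d (1-i)·e_i`.**
(a) Every pure second partial derivative `∂²H/∂x_i²` vanishes identically.
(b) At the point `c = (1/(d-1),…,1/(d-1))`, for any `k ≥ 1` pairwise distinct indices
`i_1,…,i_k` (modeled by a nodup list `L` of length `k`), the iterated partial derivative
satisfies `-∂^k H/∂x_{i_1}⋯∂x_{i_k}(c) = k·(d/(d-1))^{d-k-1}`. -/
theorem partial_derivatives_of_H (d : ℕ) (hd : 2 ≤ d)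
    (H : MvPolynomial (Fin d) ℝ)
    (hH : H = ∑ i ∈ Finset.range (d + 1),
      MvPolynomial.C (1 - (i : ℝ)) * MvPolynomial.esymm (Fin d) ℝ i) :
    (∀ i : Fin d, MvPolynomial.pderiv i (MvPolynomial.pderiv i H) = 0) ∧
    (∀ (k : ℕ) (L : List (Fin d)), 1 ≤ k → L.length = k → L.Nodup →
      - MvPolynomial.eval (fun _ : Fin d => 1 / ((d : ℝ) - 1))
          (L.foldr (fun i p => MvPolynomial.pderiv i p) H)
        = (k : ℝ) * ((d : ℝ) / ((d : ℝ) - 1)) ^ ((d : ℤ) - (k : ℤ) - 1)) := by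
  classical
  have hesymm : ∀ m : ℕ, MvPolynomial.esymm (Fin d) ℝ m = PDHaux.E d Finset.univ m :=
    fun m => rfl
  have foldr_key : ∀ L : List (Fin d), L.Nodup →
      L.foldr (fun i p => MvPolynomial.pderiv i p) H =
        ∑ m ∈ Finset.range (d + 1 - L.length),
          MvPolynomial.C ((1 : ℝ) - L.length - m) *
            PDHaux.E d (Finset.univ \ L.toFinset) m := by
    intro L
    induction L with
    | nil =>
      intro _
      simp only [List.foldr_nil, List.length_nil, List.toFinset_nil, Finset.sdiff_empty,
        Nat.cast_zero, Nat.sub_zero, sub_zero]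
      rw [hH]
      exact Finset.sum_congr rfl fun m _ => by rw [hesymm]
    | cons j L ih =>
      intro hnd
      have hndL : L.Nodup := (List.nodup_cons.mp hnd).2
      have hjL : j ∉ L := (List.nodup_cons.mp hnd).1
      have hkd : L.length + 1 ≤ d := by
        have h1 : (j :: L).toFinset.card = (j :: L).length :=
          List.toFinset_card_of_nodup hnd
        have h2 : (j :: L).toFinset.card ≤ Fintype.card (Fin d) :=
          Finset.card_le_univ _
        rw [Fintype.card_fin] at h2
        simp only [List.length_cons] at h1
        omega
      have hjT : j ∈ Finset.univ \ L.toFinset := by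
        simp [List.mem_toFinset, hjL]
      have hrange : d + 1 - L.length = (d - (L.length + 1)) + 1 + 1 := by omega
      have hlen2 : d + 1 - (j :: L).length = d - (L.length + 1) + 1 := by
        simp only [List.length_cons]; omega
      rw [List.foldr_cons, ih hndL, map_sum, hrange, Finset.sum_range_succ', hlen2]
      have hT2 : (Finset.univ \ L.toFinset).erase j = Finset.univ \ (j :: L).toFinset := by
        ext x
        simp only [Finset.mem_erase, Finset.mem_sdiff, Finset.mem_univ, true_and,
          List.toFinset_cons, Finset.mem_insert, List.mem_toFinset]
        tauto
      have hzero : MvPolynomial.pderiv j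
          (MvPolynomial.C ((1 : ℝ) - L.length - ((0 : ℕ) : ℝ)) *
            PDHaux.E d (Finset.univ \ L.toFinset) 0) = 0 := by
        rw [MvPolynomial.pderiv_C_mul, PDHaux.E_zero, MvPolynomial.pderiv_one, mul_zero]
      rw [hzero, add_zero]
      refine Finset.sum_congr rfl fun m _ => ?_
      rw [MvPolynomial.pderiv_C_mul, PDHaux.pderiv_E_mem hjT m, hT2]
      congr 2
      simp only [List.length_cons]
      push_cast
      ring
  constructor
  · intro i
    rw [hH, map_sum, map_sum]
    refine Finset.sum_eq_zero fun m _ => ?_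
    rw [hesymm, MvPolynomial.pderiv_C_mul, MvPolynomial.pderiv_C_mul]
    cases m with
    | zero =>
      rw [PDHaux.E_zero, MvPolynomial.pderiv_one, map_zero, mul_zero]
    | succ m =>
      rw [PDHaux.pderiv_E_mem (Finset.mem_univ i) m,
          PDHaux.pderiv_E_not_mem (Finset.notMem_erase i _) m, mul_zero]
  · intro k L hk hlen hnd
    have hcard : L.toFinset.card = k := by
      rw [List.toFinset_card_of_nodup hnd, hlen]
    have hkd : k ≤ d := by
      have h2 := Finset.card_le_univ L.toFinset
      rwa [hcard, Fintype.card_fin] at h2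
    have hTcard : (Finset.univ \ L.toFinset).card = d - k := by
      rw [Finset.card_sdiff_of_subset (Finset.subset_univ _), hcard, Finset.card_univ,
        Fintype.card_fin]
    rw [foldr_key L hnd, map_sum]
    have heval : ∀ m : ℕ, MvPolynomial.eval (fun _ : Fin d => 1 / ((d : ℝ) - 1))
        (MvPolynomial.C ((1 : ℝ) - L.length - m) *
          PDHaux.E d (Finset.univ \ L.toFinset) m)
        = ((1 : ℝ) - k - m) * ((d - k).choose m : ℝ) * (1 / ((d : ℝ) - 1)) ^ m := by
      intro m
      rw [map_mul, MvPolynomial.eval_C, PDHaux.eval_E, hTcard, hlen]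
      ring
    rw [Finset.sum_congr rfl (fun m _ => heval m), hlen,
        show d + 1 - k = d - k + 1 by omega]
    exact PDHaux.key_arith d k hd hk hkd
end

section
/- For d ∈ ℕ let N(1^d) := d! · a_d, where a_d is the d-th coefficient of the formal power series exp(-2x)·(1-x)^{-2} ∈ ℚ[[x]] (so N(1^d) is the degree of the hyperdeterminant of format 2^{×d}). Then as d → ∞, the ratio of N(1^d) to √(2π) · d^{(2d+1)/2} · (d+3) / e^{d+2} tends to 1. -/
open Filter Finset PowerSeries

private lemma hyp_mk_mul_one_sub :
    (PowerSeries.mk fun n => (n + 1 : ℚ)) * (1 - X) = PowerSeries.mk (fun _ => (1 : ℚ)) := by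
  ext n
  rw [mul_sub, mul_one, map_sub]
  cases n with
  | zero => simp [coeff_zero_mul_X, coeff_mk]
  | succ m => simp [coeff_succ_mul_X, coeff_mk]

private lemma hyp_mk_one_mul_one_sub :
    (PowerSeries.mk fun _ => (1 : ℚ)) * (1 - X) = 1 := by
  ext n
  rw [mul_sub, mul_one, map_sub]
  cases n with
  | zero => simp [coeff_zero_mul_X, coeff_mk]
  | succ m => simp [coeff_succ_mul_X, coeff_mk]

private lemma hyp_inv_one_sub_sq :
    ((1 - X : PowerSeries ℚ) ^ 2)⁻¹ = PowerSeries.mk fun n => (n + 1 : ℚ) := by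
  symm; rw [PowerSeries.eq_inv_iff_mul_eq_one]
  · rw [sq, ← mul_assoc, hyp_mk_mul_one_sub, hyp_mk_one_mul_one_sub]
  · simp

private lemma hyp_coeff (F : PowerSeries ℚ)
    (hF : F = PowerSeries.rescale (-2 : ℚ) (PowerSeries.exp ℚ) * ((1 - PowerSeries.X) ^ 2)⁻¹)
    (d : ℕ) :
    PowerSeries.coeff d F
      = ∑ k ∈ range (d + 1), (-2 : ℚ) ^ k * (1 / k.factorial) * ((d - k : ℕ) + 1) := by
  rw [hF, hyp_inv_one_sub_sq, PowerSeries.coeff_mul,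
    Finset.Nat.sum_antidiagonal_eq_sum_range_succ_mk]
  refine Finset.sum_congr rfl fun k hk => ?_
  rw [PowerSeries.coeff_rescale, PowerSeries.coeff_exp, PowerSeries.coeff_mk]
  simp [mul_assoc]

/-- Partial sums of the exponential series at `-2`. -/
noncomputable def hypS : ℕ → ℝ := fun n => ∑ i ∈ range n, (-2 : ℝ) ^ i / i.factorial

private lemma hyp_sumid (d : ℕ) :
    ∑ k ∈ range (d + 1), (-2 : ℝ) ^ k * (1 / k.factorial) * ((d - k : ℕ) + 1)
      = ((d : ℝ) + 1) * hypS (d + 1) + 2 * hypS d := by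
  have e1 : ∀ k ∈ range (d + 1), (-2 : ℝ) ^ k * (1 / k.factorial) * ((d - k : ℕ) + 1)
      = ((d : ℝ) + 1) * ((-2) ^ k / k.factorial) - (k : ℝ) * ((-2) ^ k / k.factorial) := by
    intro k hk
    have hkd : k ≤ d := Nat.lt_succ_iff.mp (mem_range.mp hk)
    rw [Nat.cast_sub hkd]
    ring
  rw [Finset.sum_congr rfl e1, Finset.sum_sub_distrib, ← Finset.mul_sum]
  have e2 : ∑ k ∈ range (d + 1), (k : ℝ) * ((-2) ^ k / k.factorial)
      = -2 * hypS d := by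
    rw [Finset.sum_range_succ']
    have e3 : ∀ i, ((i + 1 : ℕ) : ℝ) * ((-2) ^ (i + 1) / (i + 1).factorial)
        = -2 * ((-2 : ℝ) ^ i / i.factorial) := by
      intro i
      rw [Nat.factorial_succ, pow_succ]
      have h1 : ((i : ℝ) + 1) ≠ 0 := by positivity
      have h2 : (i.factorial : ℝ) ≠ 0 := by positivity
      push_cast
      field_simp
    simp only [e3]
    rw [← Finset.mul_sum]
    simp [hypS]
  rw [e2]; simp only [hypS]
  ring

private lemma hyp_eq (d : ℕ) (hd : 1 ≤ d) (c : ℝ) :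
    ((d.factorial : ℝ) * c) /
        (Real.sqrt (2 * Real.pi) * ((d : ℝ) ^ ((2 * (d : ℝ) + 1) / 2) * ((d : ℝ) + 3)) /
          Real.exp 1 ^ (d + 2))
      = c / ((d : ℝ) + 3) * Real.exp 2 * (Stirling.stirlingSeq d / Real.sqrt Real.pi) := by
  have hd0 : (0 : ℝ) < d := by exact_mod_cast hd
  have hrpow : (d : ℝ) ^ ((2 * (d : ℝ) + 1) / 2) = (d : ℝ) ^ d * Real.sqrt d := by
    rw [show (2 * (d : ℝ) + 1) / 2 = (d : ℝ) + (1 : ℝ) / 2 by ring,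
      Real.rpow_add hd0, Real.rpow_natCast, Real.sqrt_eq_rpow]
  have hsd : 0 < Real.sqrt d := Real.sqrt_pos.mpr hd0
  have hsp : 0 < Real.sqrt Real.pi := Real.sqrt_pos.mpr Real.pi_pos
  have hs2 : 0 < Real.sqrt 2 := by norm_num [Real.sqrt_pos]
  have hdd : (0 : ℝ) < (d : ℝ) ^ d := pow_pos hd0 d
  have hexp : (0 : ℝ) < Real.exp 1 := Real.exp_pos 1
  have hne : Real.sqrt (2 * d) * ((d : ℝ) / Real.exp 1) ^ d ≠ 0 := by
    have h1 : 0 < Real.sqrt (2 * d) := Real.sqrt_pos.mpr (by linarith)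
    have h2 : 0 < ((d : ℝ) / Real.exp 1) ^ d := pow_pos (div_pos hd0 hexp) d
    exact (mul_pos h1 h2).ne'
  have hfact : (d.factorial : ℝ)
      = Stirling.stirlingSeq d * (Real.sqrt (2 * d) * ((d : ℝ) / Real.exp 1) ^ d) := by
    rw [Stirling.stirlingSeq, div_mul_cancel₀ _ hne]
  rw [hfact, hrpow, Real.sqrt_mul (by norm_num : (0:ℝ) ≤ 2) Real.pi,
    Real.sqrt_mul (by norm_num : (0:ℝ) ≤ 2) (d : ℝ), div_pow, pow_add,
    show Real.exp 1 ^ 2 = Real.exp 2 by rw [Real.exp_one_pow]; norm_num]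
  have he2 : Real.exp 2 ≠ 0 := (Real.exp_pos 2).ne'
  have hed : Real.exp 1 ^ d ≠ 0 := (pow_pos hexp d).ne'
  have hd3 : ((d : ℝ) + 3) ≠ 0 := by positivity
  field_simp

private lemma hyp_tendsto : Tendsto (fun d : ℕ =>
    (((d : ℝ) + 1) * hypS (d + 1) + 2 * hypS d) / ((d : ℝ) + 3) * Real.exp 2 *
      (Stirling.stirlingSeq d / Real.sqrt Real.pi)) atTop (nhds 1) := by
  have hS : Tendsto hypS atTop (nhds (Real.exp (-2))) := by
    have h := (NormedSpace.expSeries_div_hasSum_exp (-2 : ℝ)).tendsto_sum_nat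
    rw [Real.exp_eq_exp_ℝ]
    exact h
  have hS1 : Tendsto (fun d => hypS (d + 1)) atTop (nhds (Real.exp (-2))) :=
    hS.comp (tendsto_add_atTop_nat 1)
  have h3 : Tendsto (fun d : ℕ => ((d : ℝ) + 3)) atTop atTop :=
    tendsto_atTop_add_const_right atTop 3 tendsto_natCast_atTop_atTop
  have hinv3 : Tendsto (fun d : ℕ => ((d : ℝ) + 3)⁻¹) atTop (nhds 0) :=
    h3.inv_tendsto_atTop
  have h13 : Tendsto (fun d : ℕ => ((d : ℝ) + 1) / ((d : ℝ) + 3)) atTop (nhds 1) := by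
    have h := (tendsto_const_nhds (x := (1 : ℝ)) (f := atTop)).sub (hinv3.const_mul 2)
    rw [show (1 : ℝ) - 2 * 0 = 1 by ring] at h
    refine h.congr fun d => ?_
    have : ((d : ℝ) + 3) ≠ 0 := by positivity
    field_simp
    ring
  have h23 : Tendsto (fun d : ℕ => 2 / ((d : ℝ) + 3)) atTop (nhds 0) := by
    have h := hinv3.const_mul 2
    rw [mul_zero] at h
    exact h.congr fun d => (div_eq_mul_inv _ _).symm
  have hstir : Tendsto (fun d => Stirling.stirlingSeq d / Real.sqrt Real.pi) atTop (nhds 1) := by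
    have h := Stirling.tendsto_stirlingSeq_sqrt_pi.div_const (Real.sqrt Real.pi)
    rwa [div_self (Real.sqrt_pos.mpr Real.pi_pos).ne'] at h
  have key := (((h13.mul hS1).add (h23.mul hS)).mul_const (Real.exp 2)).mul hstir
  have h1 : (1 * Real.exp (-2) + 0 * Real.exp (-2)) * Real.exp 2 * 1 = 1 := by
    rw [Real.exp_neg]
    field_simp
    norm_num
  rw [h1] at key
  refine key.congr fun d => ?_
  ring

/-- **Asymptotics of the degree of the hyperdeterminant of format `2^{×d}`.**
Let `N d := d! · a_d`, where `a_d` is the `d`-th coefficient of the formal power series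
`exp(-2x)·(1-x)^{-2} ∈ ℚ[[x]]`. Then `N d` is asymptotically equivalent to
`√(2π) · d^{(2d+1)/2} · (d+3) / e^{d+2}` as `d → ∞`. -/
theorem binary_hyperdet_degree_asymptotics
    (F : PowerSeries ℚ)
    (hF : F = PowerSeries.rescale (-2 : ℚ) (PowerSeries.exp ℚ) * ((1 - PowerSeries.X) ^ 2)⁻¹)
    (N : ℕ → ℚ)
    (hN : ∀ d : ℕ, N d = (d.factorial : ℚ) * PowerSeries.coeff d F) :
    Tendsto (fun d : ℕ =>
      (N d : ℝ) /
        (Real.sqrt (2 * Real.pi) * ((d : ℝ) ^ ((2 * (d : ℝ) + 1) / 2) * ((d : ℝ) + 3)) /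
          Real.exp 1 ^ (d + 2)))
      atTop (nhds 1) := by
  have hNr : ∀ d : ℕ, (N d : ℝ)
      = (d.factorial : ℝ) * (((d : ℝ) + 1) * hypS (d + 1) + 2 * hypS d) := by
    intro d
    rw [hN d, hyp_coeff F hF d, ← hyp_sumid d]
    push_cast
    ring
  refine hyp_tendsto.congr' ?_
  filter_upwards [eventually_ge_atTop 1] with d hd
  rw [hNr d, hyp_eq d hd]
end

section
/- For d ∈ ℕ define E_d := d! · ∑_{i=0}^d ((-2)^i / i!) · (2^{d+1-i} - 1) (this is the generic ED degree of the Segre product of d projective lines). Then as d → ∞, the ratio of E_d to √(2π) · d^{(2d+1)/2} · (2^{d+1}·e - 1) / e^{d+2} tends to 1. -/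
open Filter Finset
open scoped Topology

private lemma exp_partial_tendsto (x : ℝ) :
    Tendsto (fun d : ℕ => ∑ i ∈ Finset.range (d + 1), x ^ i / (i.factorial : ℝ)) atTop
      (𝓝 (Real.exp x)) := by
  rw [tendsto_add_atTop_iff_nat
    (f := fun n => ∑ i ∈ Finset.range n, x ^ i / (i.factorial : ℝ)) 1]
  apply HasSum.tendsto_sum_nat
  rw [Real.exp_eq_exp_ℝ]
  exact NormedSpace.expSeries_div_hasSum_exp x

private lemma sum_split (d : ℕ) :
    ∑ i ∈ Finset.range (d + 1),
        ((-2 : ℝ) ^ i / (i.factorial : ℝ)) * ((2 : ℝ) ^ (d + 1 - i) - 1)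
      = (2 : ℝ) ^ (d + 1) * (∑ i ∈ Finset.range (d + 1), (-1 : ℝ) ^ i / (i.factorial : ℝ))
        - ∑ i ∈ Finset.range (d + 1), (-2 : ℝ) ^ i / (i.factorial : ℝ) := by
  rw [Finset.mul_sum, ← Finset.sum_sub_distrib]
  refine Finset.sum_congr rfl fun i hi => ?_
  have hle : i ≤ d + 1 := le_of_lt (Finset.mem_range.mp hi)
  have h2 : (2 : ℝ) ^ i * (2 : ℝ) ^ (d + 1 - i) = (2 : ℝ) ^ (d + 1) := by
    rw [← pow_add, Nat.add_sub_cancel' hle]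
  have hneg : ((-2 : ℝ)) ^ i = (-1 : ℝ) ^ i * 2 ^ i := by
    rw [← neg_one_mul, mul_pow]
  have key : ((-2 : ℝ)) ^ i / (i.factorial : ℝ) * ((2 : ℝ) ^ (d + 1 - i) - 1)
      - ((2 : ℝ) ^ (d + 1) * ((-1 : ℝ) ^ i / (i.factorial : ℝ))
          - (-2 : ℝ) ^ i / (i.factorial : ℝ))
      = ((-1 : ℝ) ^ i / (i.factorial : ℝ))
          * ((2 : ℝ) ^ i * (2 : ℝ) ^ (d + 1 - i) - (2 : ℝ) ^ (d + 1)) := by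
    rw [hneg]; ring
  rw [h2, sub_self, mul_zero] at key
  exact sub_eq_zero.mp key

/-- **Asymptotics of the generic ED degree of `(ℙ^1)^{×d}`.**
Let `E_d := d! · ∑_{i=0}^d ((-2)^i / i!) · (2^{d+1-i} - 1)`. Then `E_d` is asymptotically
equivalent to `√(2π) · d^{(2d+1)/2} · (2^{d+1}·e - 1) / e^{d+2}` as `d → ∞`. -/
theorem generic_EDdegree_asymptotics
    (E : ℕ → ℝ)
    (hE : ∀ d : ℕ, E d = (d.factorial : ℝ) *
      ∑ i ∈ Finset.range (d + 1),
        ((-2 : ℝ) ^ i / (i.factorial : ℝ)) * ((2 : ℝ) ^ (d + 1 - i) - 1)) :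
    Tendsto (fun d : ℕ =>
      E d /
        (Real.sqrt (2 * Real.pi) * ((d : ℝ) ^ ((2 * (d : ℝ) + 1) / 2) *
          ((2 : ℝ) ^ (d + 1) * Real.exp 1 - 1)) / Real.exp 1 ^ (d + 2)))
      atTop (nhds 1) := by
  set e : ℝ := Real.exp 1 with he
  have hepos : 0 < e := Real.exp_pos 1
  have he2 : (2 : ℝ) ≤ e := by
    have := Real.add_one_le_exp (1 : ℝ); linarith
  set S1 : ℕ → ℝ := fun d => ∑ i ∈ Finset.range (d + 1), (-1 : ℝ) ^ i / (i.factorial : ℝ)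
    with hS1def
  set S2 : ℕ → ℝ := fun d => ∑ i ∈ Finset.range (d + 1), (-2 : ℝ) ^ i / (i.factorial : ℝ)
    with hS2def
  set y : ℕ → ℝ := fun d => ((1 : ℝ) / 2) ^ (d + 1) with hydef
  -- limits of the pieces
  have hS1 : Tendsto S1 atTop (𝓝 (Real.exp (-1))) := exp_partial_tendsto (-1)
  have hS2 : Tendsto S2 atTop (𝓝 (Real.exp (-2))) := exp_partial_tendsto (-2)
  have hy : Tendsto y atTop (𝓝 0) := by
    have h := tendsto_pow_atTop_nhds_zero_of_lt_one (by norm_num : (0:ℝ) ≤ 1/2)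
      (by norm_num : (1:ℝ)/2 < 1)
    exact h.comp (tendsto_add_atTop_nat 1)
  have hA : Tendsto (fun d : ℕ => Stirling.stirlingSeq d / Real.sqrt Real.pi) atTop (𝓝 1) := by
    have h := Stirling.tendsto_stirlingSeq_sqrt_pi.div_const (Real.sqrt Real.pi)
    rwa [div_self (ne_of_gt (Real.sqrt_pos.mpr Real.pi_pos))] at h
  have hB : Tendsto (fun d : ℕ => (S1 d - S2 d * y d) * e ^ 2 / (e - y d)) atTop (𝓝 1) := by
    have hnum : Tendsto (fun d : ℕ => (S1 d - S2 d * y d) * e ^ 2) atTop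
        (𝓝 ((Real.exp (-1) - Real.exp (-2) * 0) * e ^ 2)) :=
      ((hS1.sub (hS2.mul hy)).mul_const _)
    have hden : Tendsto (fun d : ℕ => e - y d) atTop (𝓝 (e - 0)) :=
      tendsto_const_nhds.sub hy
    have hne : e - 0 ≠ 0 := by rw [sub_zero]; exact ne_of_gt hepos
    have hthis := hnum.div hden hne
    have hval : (Real.exp (-1) - Real.exp (-2) * 0) * e ^ 2 / (e - 0) = 1 := by
      rw [mul_zero, sub_zero, sub_zero, Real.exp_neg, pow_two, ← mul_assoc,
        inv_mul_cancel₀ (ne_of_gt hepos), one_mul, div_self (ne_of_gt hepos)]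
    rw [hval] at hthis
    exact hthis
  have hlim : Tendsto (fun d : ℕ =>
      (Stirling.stirlingSeq d / Real.sqrt Real.pi) *
        ((S1 d - S2 d * y d) * e ^ 2 / (e - y d))) atTop (𝓝 1) := by
    have := hA.mul hB; rwa [one_mul] at this
  refine hlim.congr' ?_
  filter_upwards [eventually_ge_atTop 1] with d hd
  have hdpos : (0 : ℝ) < (d : ℝ) := by exact_mod_cast hd
  -- rewrite the rpow
  have hrpow : (d : ℝ) ^ ((2 * (d : ℝ) + 1) / 2) = (d : ℝ) ^ (d : ℕ) * Real.sqrt d := by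
    have h1 : (2 * (d : ℝ) + 1) / 2 = (d : ℝ) + 1 / 2 := by ring
    rw [h1, Real.rpow_add hdpos, Real.rpow_natCast, Real.sqrt_eq_rpow]
  -- stirling sequence
  have hstir : Stirling.stirlingSeq d
      = (d.factorial : ℝ) / (Real.sqrt (2 * d) * ((d : ℝ) / e) ^ d) := rfl
  -- nonzero facts
  have hsd : (0 : ℝ) < Real.sqrt d := Real.sqrt_pos.mpr hdpos
  have hs2d : (0 : ℝ) < Real.sqrt (2 * d) := Real.sqrt_pos.mpr (by linarith)
  have hspi : (0 : ℝ) < Real.sqrt Real.pi := Real.sqrt_pos.mpr Real.pi_pos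
  have hs2pi : Real.sqrt (2 * Real.pi) = Real.sqrt 2 * Real.sqrt Real.pi :=
    Real.sqrt_mul (by norm_num) _
  have hs2dm : Real.sqrt (2 * d) = Real.sqrt 2 * Real.sqrt d :=
    Real.sqrt_mul (by norm_num) _
  have hs2 : (0 : ℝ) < Real.sqrt 2 := Real.sqrt_pos.mpr (by norm_num)
  have hdd : (0 : ℝ) < (d : ℝ) ^ (d : ℕ) := pow_pos hdpos d
  have hx : (0 : ℝ) < (2 : ℝ) ^ (d + 1) := by positivity
  have hxe : (0 : ℝ) < (2 : ℝ) ^ (d + 1) * e - 1 := by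
    have h1 : (2 : ℝ) ≤ (2 : ℝ) ^ (d + 1) := by
      calc (2:ℝ) = 2 ^ 1 := (pow_one 2).symm
      _ ≤ 2 ^ (d + 1) := pow_le_pow_right₀ (by norm_num) (Nat.le_add_left 1 d)
    nlinarith
  have hy_inv : y d = ((2 : ℝ) ^ (d + 1))⁻¹ := by
    rw [hydef]; simp [inv_pow]
  have hey : (0 : ℝ) < e - y d := by
    have : y d ≤ 1 := by
      rw [hydef]
      exact pow_le_one₀ (by norm_num) (by norm_num)
    linarith
  have hed : (0 : ℝ) < e ^ (d + 2) := pow_pos hepos _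
  -- the main algebraic identity
  have e1 : ∑ i ∈ Finset.range (d + 1), (-1 : ℝ) ^ i / (i.factorial : ℝ) = S1 d := rfl
  have e2 : ∑ i ∈ Finset.range (d + 1), (-2 : ℝ) ^ i / (i.factorial : ℝ) = S2 d := rfl
  rw [hE d, sum_split d, e1, e2, hrpow, hstir, hs2pi, hs2dm, hy_inv]
  have hde : ((d : ℝ) / e) ^ d = (d : ℝ) ^ (d : ℕ) / e ^ (d : ℕ) := div_pow _ _ _
  rw [hde]
  have hedd : (0 : ℝ) < e ^ (d : ℕ) := pow_pos hepos _
  have hpow2 : e ^ (d + 2) = e ^ (d : ℕ) * e ^ 2 := by rw [pow_add]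
  rw [hpow2]
  rw [hy_inv] at hey
  have hP : (0:ℝ) < Real.sqrt 2 * Real.sqrt Real.pi * (d : ℝ) ^ (d : ℕ) * Real.sqrt d := by
    positivity
  have hxe2 : (0:ℝ) < (2:ℝ) ^ (d : ℕ) * 2 * e - 1 := by
    have : (2:ℝ) ^ (d + 1) = 2 ^ d * 2 := pow_succ 2 d
    nlinarith [hxe]
  have hbig : e * Real.sqrt 2 * Real.sqrt Real.pi * (d : ℝ) ^ (d : ℕ) * Real.sqrt d
        * (2:ℝ) ^ (d : ℕ) * 2
      - Real.sqrt 2 * Real.sqrt Real.pi * (d : ℝ) ^ (d : ℕ) * Real.sqrt d ≠ 0 := by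
    nlinarith [mul_pos hP hxe2]
  field_simp [hbig]
end

section
/- For integers n, m, i, d with 0 ≤ i ≤ m ≤ n, define α_i(n,m,d) := ∑_{s=i}^{n+m} (-1)^s (m+n+1-s) · [∑_{k=0}^{s-i} C(n+2,k)·(-d)^{s-i-k}] · C(m+n-s, n-s+i), where C(a,b) denotes the binomial coefficient with the convention C(a,b) = 0 whenever b < 0 or b > a. Then for all integers d and all n ≥ m: α_i(n+1, m, d) = (d-1) · α_i(n, m, d). -/
open Finset

/-- The binomial coefficient `C(a,b)` for integers, with the convention that
`C(a,b) = 0` whenever `b < 0` or `b > a`. -/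
def intChoose (a b : ℤ) : ℤ :=
  if 0 ≤ b ∧ b ≤ a then (a.toNat.choose b.toNat : ℤ) else 0

lemma intChoose_coe (a b : ℕ) (h : b ≤ a) : intChoose a b = a.choose b := by
  simp [intChoose, h]

lemma intChoose_neg (a b : ℤ) (h : b < 0) : intChoose a b = 0 := by
  simp [intChoose, not_le.2 h]

/-- truncated geometric-like polynomial -/
def P (n : ℕ) (d : ℤ) (j : ℕ) : ℤ :=
  ∑ k ∈ range (j + 1), ((n + 2).choose k : ℤ) * (-d) ^ (j - k)

lemma P_zero (n : ℕ) (d : ℤ) : P n d 0 = 1 := by simp [P]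

lemma P_succ_n (n : ℕ) (d : ℤ) (j : ℕ) :
    P (n + 1) d (j + 1) = P n d (j + 1) + P n d j := by
  have h1 : P (n+1) d (j+1)
      = ∑ k ∈ range (j+1), ((n+3).choose (k+1) : ℤ) * (-d) ^ (j - k) + (-d)^(j+1) := by
    rw [P, Finset.sum_range_succ']
    simp
  have h2 : P n d (j+1)
      = ∑ k ∈ range (j+1), ((n+2).choose (k+1) : ℤ) * (-d) ^ (j - k) + (-d)^(j+1) := by
    rw [P, Finset.sum_range_succ']
    simp
  rw [h1, h2, P]
  rw [add_right_comm, ← Finset.sum_add_distrib]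
  congr 1
  apply Finset.sum_congr rfl
  intro k _
  have : (n + 3).choose (k + 1) = (n+2).choose k + (n + 2).choose (k+1) :=
    Nat.choose_succ_succ (n+2) k
  rw [this]
  push_cast
  ring

lemma P_rec (n : ℕ) (d : ℤ) (j : ℕ) :
    P n d (j + 1) = -d * P n d j + ((n + 2).choose (j + 1) : ℤ) := by
  rw [P, Finset.sum_range_succ, P, Finset.mul_sum]
  simp only [Nat.sub_self, pow_zero, mul_one]
  congr 1
  apply Finset.sum_congr rfl
  intro k hk
  rw [Finset.mem_range] at hk
  have : j + 1 - k = (j - k) + 1 := by omega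
  rw [this, pow_succ]
  ring

/-- generic finite-difference step for alternating binomial sums -/
lemma alt_step (b : ℕ) (g : ℕ → ℤ) :
    ∑ j ∈ range (b + 2), (-1 : ℤ) ^ j * ((b + 1).choose j : ℤ) * g j
      = ∑ j ∈ range (b + 1), (-1 : ℤ) ^ j * (b.choose j : ℤ) * (g j - g (j + 1)) := by
  have peel : ∑ j ∈ range (b + 2), (-1 : ℤ) ^ j * ((b + 1).choose j : ℤ) * g j
      = ∑ j ∈ range (b + 1), (-1 : ℤ) ^ (j+1) * ((b + 1).choose (j+1) : ℤ) * g (j+1) + g 0 := by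
    rw [Finset.sum_range_succ']
    simp
  have shift : ∑ j ∈ range (b + 1), (-1 : ℤ) ^ j * (b.choose (j+1) : ℤ) * g (j+1)
      = g 0 - ∑ j ∈ range (b + 1), (-1 : ℤ) ^ j * (b.choose j : ℤ) * g j := by
    have h1 : ∑ j ∈ range (b + 1), (-1 : ℤ) ^ j * (b.choose (j+1) : ℤ) * g (j+1)
        = -∑ j ∈ range (b + 1), (-1 : ℤ) ^ (j+1) * (b.choose (j+1) : ℤ) * g (j+1) := by
      rw [← Finset.sum_neg_distrib]
      apply Finset.sum_congr rfl
      intro j _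
      rw [pow_succ]
      ring
    have h2 : ∑ j ∈ range (b + 2), (-1 : ℤ) ^ j * (b.choose j : ℤ) * g j
        = ∑ j ∈ range (b + 1), (-1 : ℤ) ^ (j+1) * (b.choose (j+1) : ℤ) * g (j+1) + g 0 := by
      rw [Finset.sum_range_succ']
      simp
    have h3 : ∑ j ∈ range (b + 2), (-1 : ℤ) ^ j * (b.choose j : ℤ) * g j
        = ∑ j ∈ range (b + 1), (-1 : ℤ) ^ j * (b.choose j : ℤ) * g j := by
      rw [Finset.sum_range_succ]
      simp [Nat.choose_succ_self]
    rw [h1]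
    rw [h3] at h2
    linarith [h2]
  rw [peel]
  have expand : ∀ j ∈ range (b+1), (-1 : ℤ) ^ (j+1) * ((b + 1).choose (j+1) : ℤ) * g (j+1)
      = -((-1:ℤ)^j * (b.choose j : ℤ) * g (j+1)) - ((-1:ℤ)^j * (b.choose (j+1) : ℤ) * g (j+1)) := by
    intro j _
    rw [Nat.choose_succ_succ]
    push_cast
    ring
  rw [Finset.sum_congr rfl expand, Finset.sum_sub_distrib, shift]
  have : ∑ x ∈ range (b + 1), -((-1:ℤ) ^ x * (b.choose x : ℤ) * g (x + 1))
      = -∑ x ∈ range (b + 1), (-1:ℤ) ^ x * (b.choose x : ℤ) * g (x + 1) := by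
    rw [← Finset.sum_neg_distrib]
  rw [this, eq_comm]
  have : ∑ j ∈ range (b + 1), (-1:ℤ) ^ j * (b.choose j : ℤ) * (g j - g (j + 1))
      = ∑ j ∈ range (b + 1), (-1:ℤ) ^ j * (b.choose j : ℤ) * g j
        - ∑ j ∈ range (b + 1), (-1:ℤ) ^ j * (b.choose j : ℤ) * g (j + 1) := by
    rw [← Finset.sum_sub_distrib]
    apply Finset.sum_congr rfl
    intro j _
    ring
  rw [this]
  ring

/-- Alternating binomial sums against a shifted binomial of lower degree vanish. -/
lemma vanish : ∀ (r b t : ℕ), r < b → b ≤ t →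
    ∑ j ∈ range (b + 1), (-1 : ℤ) ^ j * (b.choose j : ℤ) * ((t - j).choose r : ℤ) = 0 := by
  intro r
  induction r with
  | zero =>
    intro b t hrb hbt
    obtain ⟨b', rfl⟩ : ∃ b', b = b' + 1 := ⟨b - 1, by omega⟩
    rw [alt_step b' (fun j => ((t - j).choose 0 : ℤ))]
    apply Finset.sum_eq_zero
    intro j _
    simp
  | succ r ih =>
    intro b t hrb hbt
    obtain ⟨b', rfl⟩ : ∃ b', b = b' + 1 := ⟨b - 1, by omega⟩
    rw [alt_step b' (fun j => ((t - j).choose (r+1) : ℤ))]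
    have key : ∀ j ∈ range (b' + 1),
        (-1 : ℤ) ^ j * (b'.choose j : ℤ) *
          (((t - j).choose (r+1) : ℤ) - ((t - (j+1)).choose (r+1) : ℤ))
        = (-1 : ℤ) ^ j * (b'.choose j : ℤ) * (((t - 1) - j).choose r : ℤ) := by
      intro j hj
      rw [Finset.mem_range] at hj
      have h1 : t - j = (t - (j+1)) + 1 := by omega
      have h2 : t - 1 - j = t - (j + 1) := by omega
      rw [h1, h2, Nat.choose_succ_succ]
      push_cast
      ring
    rw [Finset.sum_congr rfl key]
    exact ih b' (t - 1) (by omega) (by omega)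

/-- Coefficient in the `beta` sum. -/
def Tc (n M j : ℕ) : ℤ := (-1 : ℤ) ^ j * ((M : ℤ) + n + 1 - j) * ((M + n - j).choose M : ℤ)

/-- Natural-indexed version of `alphaCoeff` (up to the sign `(-1)^i`, with `M = m - i`). -/
def beta (n M : ℕ) (d : ℤ) : ℤ := ∑ j ∈ range (n + 1), Tc n M j * P n d j

lemma Tc_shift (n M j : ℕ) : Tc (n + 1) M (j + 1) = -(Tc n M j) := by
  unfold Tc
  have h : M + (n + 1) - (j + 1) = M + n - j := by omega
  rw [h]
  push_cast
  ring

lemma beta_succ (n M : ℕ) (hM : M ≤ n) (d : ℤ) :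
    beta (n + 1) M d = (d - 1) * beta n M d := by
  have e1 : beta (n + 1) M d
      = ∑ j ∈ range (n + 2), Tc (n + 1) M j * P n d j - beta n M d := by
    rw [beta, Finset.sum_range_succ' _ (n + 1)]
    have hsplit : ∀ j ∈ range (n + 1), Tc (n+1) M (j+1) * P (n+1) d (j+1)
        = Tc (n+1) M (j+1) * P n d (j+1) - Tc n M j * P n d j := by
      intro j _
      rw [P_succ_n, Tc_shift]
      ring
    rw [Finset.sum_congr rfl hsplit, Finset.sum_sub_distrib]
    rw [Finset.sum_range_succ' (fun j => Tc (n+1) M j * P n d j) (n + 1)]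
    rw [P_zero, P_zero]
    unfold beta
    ring
  have e2 : ∑ j ∈ range (n + 2), Tc (n + 1) M j * P n d j
      = d * beta n M d + ∑ j ∈ range (n + 2), Tc (n + 1) M j * ((n + 2).choose j : ℤ) := by
    rw [Finset.sum_range_succ' _ (n + 1)]
    have hsplit : ∀ j ∈ range (n + 1), Tc (n+1) M (j+1) * P n d (j+1)
        = d * (Tc n M j * P n d j) + Tc (n+1) M (j+1) * ((n + 2).choose (j+1) : ℤ) := by
      intro j _
      rw [P_rec, Tc_shift]
      ring
    rw [Finset.sum_congr rfl hsplit, Finset.sum_add_distrib, ← Finset.mul_sum]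
    rw [Finset.sum_range_succ' (fun j => Tc (n+1) M j * ((n + 2).choose j : ℤ)) (n + 1)]
    rw [P_zero]
    unfold beta
    simp only [Nat.choose_zero_right, Nat.cast_one]
    ring
  have e3 : ∑ j ∈ range (n + 2), Tc (n + 1) M j * ((n + 2).choose j : ℤ) = 0 := by
    have hterm : ∀ j ∈ range (n + 2), Tc (n + 1) M j * ((n + 2).choose j : ℤ)
        = (M + 1 : ℤ) * ((-1:ℤ)^j * ((n+2).choose j : ℤ) * (((M + n + 2 - j).choose (M+1) : ℤ))) := by
      intro j hj
      rw [Finset.mem_range] at hj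
      unfold Tc
      have hc : ((M : ℤ) + ↑(n+1) + 1 - j) = ((M + n + 2 - j : ℕ) : ℤ) := by
        push_cast [Nat.cast_sub (by omega : j ≤ M + n + 2)]
        ring
      have hmul : (M + n + 2 - j) * ((M + (n+1) - j).choose M)
          = ((M + n + 2 - j).choose (M + 1)) * (M + 1) := by
        have h1 : M + (n + 1) - j = M + n + 1 - j := by omega
        have h2 : M + n + 2 - j = (M + n + 1 - j) + 1 := by omega
        rw [h1, h2]
        exact Nat.add_one_mul_choose_eq (M + n + 1 - j) M
      rw [hc]
      have := congrArg (fun x : ℕ => (x : ℤ)) hmul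
      push_cast at this ⊢
      linear_combination ((-1:ℤ)^j * ((n+2).choose j : ℤ)) * this
    rw [Finset.sum_congr rfl hterm, ← Finset.mul_sum]
    have hext : ∑ j ∈ range (n + 2), (-1:ℤ)^j * ((n+2).choose j : ℤ) * (((M + n + 2 - j).choose (M+1) : ℤ))
        = ∑ j ∈ range (n + 3), (-1:ℤ)^j * ((n+2).choose j : ℤ) * (((M + n + 2 - j).choose (M+1) : ℤ)) := by
      rw [Finset.sum_range_succ
        (fun j => (-1:ℤ)^j * ((n+2).choose j : ℤ) * (((M + n + 2 - j).choose (M+1) : ℤ))) (n+2)]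
      have : M + n + 2 - (n + 2) = M := by omega
      rw [this]
      rw [Nat.choose_eq_zero_of_lt (Nat.lt_succ_self M)]
      simp
    rw [hext]
    have := vanish (M + 1) (n + 2) (M + n + 2) (by omega) (by omega)
    have hsame : ∀ j ∈ range (n + 3),
        (-1:ℤ)^j * ((n+2).choose j : ℤ) * (((M + n + 2 - j).choose (M+1) : ℤ))
        = (-1:ℤ)^j * ((n+2).choose j : ℤ) * ((((M + n + 2) - j).choose (M+1) : ℤ)) := by
      intro j _; rfl
    rw [Finset.sum_congr rfl hsame, this, mul_zero]
  rw [e1, e2, e3]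
  ring

/-- The coefficient `α_i(n,m,d)` expressing the zeroth polar class of `X × Y_n` in terms of
the degrees of the Chern–Mather classes of `X`. -/
def alphaCoeff (n m i : ℕ) (d : ℤ) : ℤ :=
  ∑ s ∈ Finset.Icc i (n + m),
    (-1 : ℤ) ^ s * ((m : ℤ) + n + 1 - s) *
      (∑ k ∈ Finset.range (s - i + 1), intChoose ((n : ℤ) + 2) k * (-d) ^ (s - i - k)) *
      intChoose ((m : ℤ) + n - s) ((n : ℤ) - s + i)

lemma alpha_eq (n m i : ℕ) (d : ℤ) (hi : i ≤ m) :
    alphaCoeff n m i d = (-1 : ℤ) ^ i * beta n (m - i) d := by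
  set M := m - i with hM
  have hm : m = M + i := by omega
  rw [alphaCoeff, ← Finset.Ico_add_one_right_eq_Icc, Finset.sum_Ico_eq_sum_range]
  have hrange : n + m + 1 - i = n + M + 1 := by omega
  rw [hrange]
  have htr : ∑ j ∈ range (n + M + 1),
        ((-1 : ℤ) ^ (i + j) * ((m : ℤ) + n + 1 - ((i + j : ℕ) : ℤ)) *
          (∑ k ∈ Finset.range ((i + j) - i + 1), intChoose ((n : ℤ) + 2) k * (-d) ^ ((i + j) - i - k)) *
          intChoose ((m : ℤ) + n - ((i + j : ℕ) : ℤ)) ((n : ℤ) - ((i + j : ℕ) : ℤ) + i))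
      = ∑ j ∈ range (n + 1),
        ((-1 : ℤ) ^ (i + j) * ((m : ℤ) + n + 1 - ((i + j : ℕ) : ℤ)) *
          (∑ k ∈ Finset.range ((i + j) - i + 1), intChoose ((n : ℤ) + 2) k * (-d) ^ ((i + j) - i - k)) *
          intChoose ((m : ℤ) + n - ((i + j : ℕ) : ℤ)) ((n : ℤ) - ((i + j : ℕ) : ℤ) + i)) := by
    apply (Finset.sum_subset (Finset.range_subset_range.2 (by omega)) _).symm
    intro j _ hj
    rw [Finset.mem_range, not_lt] at hj
    have : intChoose ((m : ℤ) + n - ((i + j : ℕ) : ℤ)) ((n : ℤ) - ((i + j : ℕ) : ℤ) + i) = 0 := by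
      apply intChoose_neg
      push_cast
      omega
    rw [this, mul_zero]
  rw [htr, beta, Finset.mul_sum]
  apply Finset.sum_congr rfl
  intro j hj
  rw [Finset.mem_range] at hj
  have hji : i + j - i = j := by omega
  rw [hji]
  have hP : ∑ k ∈ Finset.range (j + 1), intChoose ((n : ℤ) + 2) k * (-d) ^ (j - k) = P n d j := by
    apply Finset.sum_congr rfl
    intro k hk
    rw [Finset.mem_range] at hk
    congr 1
    have h2 : ((n : ℤ) + 2) = ((n + 2 : ℕ) : ℤ) := by push_cast; ring
    rw [h2, intChoose_coe (n + 2) k (by omega)]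
  have hC : intChoose ((m : ℤ) + n - ((i + j : ℕ) : ℤ)) ((n : ℤ) - ((i + j : ℕ) : ℤ) + i)
      = ((M + n - j).choose M : ℤ) := by
    have h1 : ((m : ℤ) + n - ((i + j : ℕ) : ℤ)) = ((M + n - j : ℕ) : ℤ) := by
      push_cast [Nat.cast_sub (by omega : j ≤ M + n)]
      omega
    have h2 : ((n : ℤ) - ((i + j : ℕ) : ℤ) + i) = ((n - j : ℕ) : ℤ) := by
      push_cast [Nat.cast_sub (by omega : j ≤ n)]
      ring
    rw [h1, h2, intChoose_coe _ _ (by omega)]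
    congr 1
    have := Nat.choose_symm (by omega : n - j ≤ M + n - j)
    have hd : M + n - j - (n - j) = M := by omega
    rw [hd] at this
    exact this.symm
  rw [hP, hC, Tc]
  have hcoeff : ((m : ℤ) + n + 1 - ((i + j : ℕ) : ℤ)) = ((M : ℤ) + n + 1 - j) := by
    push_cast
    omega
  rw [hcoeff, pow_add]
  ring

/-- For all `0 ≤ i ≤ m ≤ n` and all integers `d`:
`α_i(n+1, m, d) = (d-1) · α_i(n, m, d)`. -/
theorem alphaCoeff_succ (n m i : ℕ) (d : ℤ) (hi : i ≤ m) (hmn : m ≤ n) :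
    alphaCoeff (n + 1) m i d = (d - 1) * alphaCoeff n m i d := by
  rw [alpha_eq (n + 1) m i d hi, alpha_eq n m i d hi, beta_succ n (m - i) (by omega) d]
  ring
end

section
/- For all integers n ≥ m ≥ 0, setting f(n) := ∑_{r=0}^{n} (-1)^r · C(n+1, r+1) · C(m+n+1-r, m), the recurrence (1+n-m)·f(n) + (n+3)·f(n+1) = 2·(m+n+2)! / ((n+1)!·m!) holds. -/
open Finset

lemma diff_step (N : ℕ) (g : ℕ → ℚ) :
    ∑ s ∈ range (N + 2), (-1:ℚ)^s * ((N+1).choose s : ℚ) * g s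
      = ∑ s ∈ range (N + 1), (-1:ℚ)^s * (N.choose s : ℚ) * (g s - g (s+1)) := by
  have h1 : ∑ s ∈ range (N + 2), (-1:ℚ)^s * ((N+1).choose s : ℚ) * g s
      = (∑ s ∈ range (N + 1), (-1:ℚ)^(s+1) * ((N+1).choose (s+1) : ℚ) * g (s+1)) + g 0 := by
    rw [Finset.sum_range_succ']; simp
  have h2 : (∑ s ∈ range (N + 1), (-1:ℚ)^(s+1) * (N.choose (s+1) : ℚ) * g (s+1)) + g 0
      = ∑ s ∈ range (N + 2), (-1:ℚ)^s * (N.choose s : ℚ) * g s := by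
    conv_rhs => rw [Finset.sum_range_succ']
    simp
  have h3 : ∑ s ∈ range (N + 2), (-1:ℚ)^s * (N.choose s : ℚ) * g s
      = ∑ s ∈ range (N + 1), (-1:ℚ)^s * (N.choose s : ℚ) * g s := by
    rw [Finset.sum_range_succ, Nat.choose_succ_self]; simp
  rw [h1]
  have h4 : ∀ s ∈ range (N+1), (-1:ℚ)^(s+1) * ((N+1).choose (s+1) : ℚ) * g (s+1)
      = (-1:ℚ)^(s+1) * (N.choose (s+1) : ℚ) * g (s+1)
        + (-((-1:ℚ)^s * (N.choose s : ℚ) * g (s+1))) := by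
    intro s _
    rw [Nat.choose_succ_succ']
    push_cast
    ring
  rw [Finset.sum_congr rfl h4, Finset.sum_add_distrib]
  rw [add_right_comm, h2, h3, ← Finset.sum_add_distrib]
  apply Finset.sum_congr rfl
  intro s _
  ring

lemma alt_sum_vanish : ∀ (K N M : ℕ), K < N → N ≤ M →
    ∑ s ∈ range (N + 1), (-1:ℚ)^s * (N.choose s : ℚ) * ((M - s).choose K : ℚ) = 0 := by
  intro K
  induction K with
  | zero =>
    intro N M hK hM
    simp only [Nat.choose_zero_right, Nat.cast_one, mul_one]
    have := Int.alternating_sum_range_choose_of_ne (n := N) (by omega)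
    have : ((∑ i ∈ range (N + 1), (-1:ℤ) ^ i * ↑(N.choose i) : ℤ) : ℚ) = 0 := by
      rw [this]; simp
    push_cast at this
    convert this using 2
  | succ K ih =>
    intro N M hK hM
    obtain ⟨N', rfl⟩ : ∃ N', N = N' + 1 := ⟨N - 1, by omega⟩
    rw [diff_step]
    have h4 : ∀ s ∈ range (N'+1),
        (-1:ℚ)^s * (N'.choose s : ℚ) * (((M - s).choose (K+1) : ℚ) - ((M - (s+1)).choose (K+1) : ℚ))
        = (-1:ℚ)^s * (N'.choose s : ℚ) * (((M - 1 - s).choose K : ℚ)) := by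
      intro s hs
      simp only [Finset.mem_range] at hs
      have hsM : s + 1 ≤ M := by omega
      have e1 : M - s = (M - 1 - s) + 1 := by omega
      have e2 : M - (s+1) = M - 1 - s := by omega
      rw [e1, e2, Nat.choose_succ_succ']
      push_cast
      ring
    rw [Finset.sum_congr rfl h4]
    exact ih N' (M - 1) (by omega) (by omega)

lemma f_closed (m n : ℕ) (h : m ≤ n) :
    ∑ r ∈ range (n+1), (-1:ℚ)^r * ((n+1).choose (r+1) : ℚ) * ((m+n+1-r).choose m : ℚ)
      = ((m+n+2).choose m : ℚ) := by
  have h0 := alt_sum_vanish m (n+1) (m+n+2) (by omega) (by omega)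
  rw [Finset.sum_range_succ'] at h0
  simp only [pow_zero, Nat.choose_zero_right, Nat.cast_one, one_mul, Nat.sub_zero] at h0
  have h1 : ∀ r ∈ range (n+1),
      (-1:ℚ)^(r+1) * ((n+1).choose (r+1) : ℚ) * ((m+n+2 - (r+1)).choose m : ℚ)
      = -((-1:ℚ)^r * ((n+1).choose (r+1) : ℚ) * ((m+n+1-r).choose m : ℚ)) := by
    intro r _
    have : m + n + 2 - (r+1) = m + n + 1 - r := by omega
    rw [this]; ring
  rw [Finset.sum_congr rfl h1, Finset.sum_neg_distrib] at h0
  linarith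

/-- **Zeilberger recurrence for `f(n) = ∑_{r=0}^{n} (-1)^r C(n+1,r+1) C(m+n+1-r, m)`.**
For all `n ≥ m ≥ 0`: `(1+n-m)·f(n) + (n+3)·f(n+1) = 2·(m+n+2)! / ((n+1)!·m!)`. -/
theorem zeilberger_recurrence_f (m : ℕ) (f : ℕ → ℚ)
    (hf : ∀ N : ℕ, f N = ∑ r ∈ Finset.range (N + 1),
      (-1 : ℚ) ^ r * ((N + 1).choose (r + 1) : ℚ) * ((m + N + 1 - r).choose m : ℚ))
    (n : ℕ) (hmn : m ≤ n) :
    (1 + (n : ℚ) - (m : ℚ)) * f n + ((n : ℚ) + 3) * f (n + 1)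
      = 2 * ((m + n + 2).factorial : ℚ) / (((n + 1).factorial : ℚ) * (m.factorial : ℚ)) := by
  have e1 : f n = ((m+n+2).choose m : ℚ) := by rw [hf n]; exact f_closed m n hmn
  have e2 : f (n+1) = ((m+n+3).choose m : ℚ) := by
    rw [hf (n+1)]
    have := f_closed m (n+1) (by omega)
    convert this using 3 <;> omega
  rw [e1, e2]
  have c1 : ((m+n+2).choose m : ℚ) = ((m+n+2).factorial : ℚ) / ((m.factorial : ℚ) * ((n+2).factorial : ℚ)) := by
    rw [Nat.cast_choose ℚ (by omega : m ≤ m+n+2)]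
    rw [show m + n + 2 - m = n + 2 from by omega]
  have c2 : ((m+n+3).choose m : ℚ) = ((m+n+3).factorial : ℚ) / ((m.factorial : ℚ) * ((n+3).factorial : ℚ)) := by
    rw [Nat.cast_choose ℚ (by omega : m ≤ m+n+3)]
    rw [show m + n + 3 - m = n + 3 from by omega]
  rw [c1, c2]
  have f1 : ((n+2).factorial : ℚ) = ((n:ℚ)+2) * ((n+1).factorial : ℚ) := by
    rw [show n + 2 = (n+1) + 1 from rfl, Nat.factorial_succ]; push_cast; ring
  have f2 : ((n+3).factorial : ℚ) = ((n:ℚ)+3) * ((n:ℚ)+2) * ((n+1).factorial : ℚ) := by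
    rw [show n + 3 = (n+2) + 1 from rfl, Nat.factorial_succ]; push_cast; rw [f1]; push_cast; ring
  have f3 : ((m+n+3).factorial : ℚ) = ((m:ℚ)+(n:ℚ)+3) * ((m+n+2).factorial : ℚ) := by
    rw [show m + n + 3 = (m+n+2) + 1 from rfl, Nat.factorial_succ]; push_cast; ring
  rw [f1, f2, f3]
  have nz1 : ((n+1).factorial : ℚ) ≠ 0 := Nat.cast_ne_zero.mpr (Nat.factorial_ne_zero _)
  have nz2 : (m.factorial : ℚ) ≠ 0 := Nat.cast_ne_zero.mpr (Nat.factorial_ne_zero _)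
  have nz3 : ((n:ℚ)+2) ≠ 0 := by positivity
  have nz4 : ((n:ℚ)+3) ≠ 0 := by positivity
  field_simp
  ring
end

section
/- For all integers n ≥ 0 and m ≥ 0: ∑_{r=m}^{n+m} (-1)^r (m+n+1-r) · C(n+2, r+1-m) = (-1)^m · (n+2). -/
open Finset

lemma aux_jsum (n : ℕ) :
    ∑ j ∈ range (n + 3), (-1 : ℤ) ^ j * (j : ℤ) * ((n + 2).choose j : ℤ) = 0 := by
  rw [Finset.sum_range_succ'];
  simp only [Nat.cast_zero, mul_zero, zero_mul, add_zero]
  have key : ∀ i : ℕ, (-1 : ℤ) ^ (i + 1) * ((i : ℤ) + 1) * ((n + 2).choose (i + 1) : ℤ)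
      = -((n : ℤ) + 2) * ((-1 : ℤ) ^ i * ((n + 1).choose i : ℤ)) := by
    intro i
    have h := Nat.add_one_mul_choose_eq (n + 1) i
    have h' : ((n : ℤ) + 2) * ((n + 1).choose i : ℤ)
        = ((n + 2).choose (i + 1) : ℤ) * ((i : ℤ) + 1) := by
      exact_mod_cast congrArg (Nat.cast : ℕ → ℤ) h
    linear_combination ((-1 : ℤ) ^ i) * h'
  calc ∑ i ∈ range (n + 2), (-1 : ℤ) ^ (i + 1) * (((i : ℕ) : ℤ) + 1) * ((n + 2).choose (i + 1) : ℤ)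
      = ∑ i ∈ range (n + 2), -((n : ℤ) + 2) * ((-1 : ℤ) ^ i * ((n + 1).choose i : ℤ)) := by
        apply Finset.sum_congr rfl; intro i _; push_cast; rw [key i]
    _ = -((n : ℤ) + 2) * ∑ i ∈ range (n + 2), (-1 : ℤ) ^ i * ((n + 1).choose i : ℤ) := by
        rw [Finset.mul_sum]
    _ = 0 := by
        rw [Int.alternating_sum_range_choose_of_ne (Nat.succ_ne_zero n), mul_zero]

lemma aux_full (n : ℕ) :
    ∑ j ∈ range (n + 3), (-1 : ℤ) ^ j * ((n : ℤ) + 2 - j) * ((n + 2).choose j : ℤ) = 0 := by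
  have h1 := aux_jsum n
  have h2 := Int.alternating_sum_range_choose_of_ne (n := n + 2) (by omega)
  have expand : ∀ j ∈ range (n + 3), (-1 : ℤ) ^ j * ((n : ℤ) + 2 - j) * ((n + 2).choose j : ℤ)
      = ((n : ℤ) + 2) * ((-1 : ℤ) ^ j * ((n + 2).choose j : ℤ))
        - (-1 : ℤ) ^ j * (j : ℤ) * ((n + 2).choose j : ℤ) := by
    intro j _; ring
  rw [Finset.sum_congr rfl expand, Finset.sum_sub_distrib, ← Finset.mul_sum]
  rw [show n + 3 = (n + 2) + 1 from rfl] at *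
  rw [h2, h1]; ring

lemma key_lemma (n : ℕ) :
    ∑ i ∈ range (n + 1), (-1 : ℤ) ^ i * ((n : ℤ) + 1 - i) * ((n + 2).choose (i + 1) : ℤ)
      = (n : ℤ) + 2 := by
  have h := aux_full n
  rw [Finset.sum_range_succ'] at h
  rw [show n + 2 = (n + 1) + 1 from rfl, Finset.sum_range_succ] at h
  simp only [Nat.choose_self, Nat.cast_one, Nat.cast_zero, pow_zero] at h
  -- h now: ∑ i ∈ range (n+1), f(i+1) + top + bottom = 0
  have : ∀ i ∈ range (n + 1), (-1 : ℤ) ^ (i + 1) * ((n : ℤ) + 2 - ((i : ℤ) + 1)) * ((n + 2).choose (i + 1) : ℤ)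
      = -((-1 : ℤ) ^ i * ((n : ℤ) + 1 - i) * ((n + 2).choose (i + 1) : ℤ)) := by
    intro i _; rw [pow_succ]; ring
  push_cast at h
  rw [Finset.sum_congr rfl this, Finset.sum_neg_distrib,
    show ((n : ℤ) + 2 - ((n : ℤ) + 1 + 1)) = 0 from by ring] at h
  simp at h
  linarith

/-- **The case `i = m` of the master binomial identity.** For all `n, m ≥ 0`:
`∑_{r=m}^{n+m} (-1)^r (m+n+1-r) · C(n+2, r+1-m) = (-1)^m · (n+2)`. -/
theorem binomial_identity_i_m (n m : ℕ) :
    ∑ r ∈ Finset.Icc m (n + m),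
      (-1 : ℤ) ^ r * ((m : ℤ) + n + 1 - r) * ((n + 2).choose (r + 1 - m) : ℤ)
      = (-1 : ℤ) ^ m * ((n : ℤ) + 2) := by
  have hre : ∑ r ∈ Finset.Icc m (n + m),
      (-1 : ℤ) ^ r * ((m : ℤ) + n + 1 - r) * ((n + 2).choose (r + 1 - m) : ℤ)
      = ∑ i ∈ range (n + 1),
        (-1 : ℤ) ^ (m + i) * ((m : ℤ) + n + 1 - (m + i)) * ((n + 2).choose (m + i + 1 - m) : ℤ) := by
    rw [← Finset.Ico_add_one_right_eq_Icc, Finset.sum_Ico_eq_sum_range,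
      show n + m + 1 - m = n + 1 from by omega]
    push_cast
    rfl
  rw [hre]
  have : ∀ i ∈ range (n + 1),
      (-1 : ℤ) ^ (m + i) * ((m : ℤ) + n + 1 - (m + i)) * ((n + 2).choose (m + i + 1 - m) : ℤ)
      = (-1 : ℤ) ^ m * ((-1 : ℤ) ^ i * ((n : ℤ) + 1 - i) * ((n + 2).choose (i + 1) : ℤ)) := by
    intro i _
    rw [pow_add]
    have : m + i + 1 - m = i + 1 := by omega
    rw [this]
    push_cast
    ring
  rw [Finset.sum_congr rfl this, ← Finset.mul_sum, key_lemma]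
end

section
/- For all integers j ≥ 1 and n ≥ j, the following identity of rational numbers holds: ∑_{s=0}^{n} (-1)^s · (n+1-s+j)! / ((n+1-s)! · (s+1)! · (n-s)!) = (n+2+j)! / ((n+1)! · (n+2)!). -/
open Finset

lemma polyA (m c : ℕ) (h : m ≤ c) :
    ∑ t ∈ Finset.range (m+1),
      Polynomial.C ((-1:ℚ)^t * (m.choose t : ℚ)) * (1 + Polynomial.X)^(c-t)
    = Polynomial.X^m * (1 + Polynomial.X)^(c-m) := by
  have hx : (Polynomial.X : Polynomial ℚ)^m * (1 + Polynomial.X)^(c-m)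
      = ((1 + Polynomial.X) + (-1))^m * (1 + Polynomial.X)^(c-m) := by ring_nf
  rw [hx, add_pow, Finset.sum_mul, ← Finset.sum_range_reflect]
  apply Finset.sum_congr rfl
  intro t ht
  simp only [Finset.mem_range] at ht
  have ht' : t ≤ m := Nat.lt_succ_iff.mp ht
  have h1 : m + 1 - 1 - t = m - t := by omega
  rw [h1, Nat.choose_symm ht']
  have h3 : c - (m - t) = t + (c - m) := by omega
  rw [h3, pow_add]
  simp only [map_mul, map_pow, map_neg, map_one, Polynomial.C_eq_natCast]
  ring

lemma lemB (m c k : ℕ) (hmc : m ≤ c) (hk : k < m) :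
    ∑ t ∈ Finset.range (m+1), (-1:ℚ)^t * (m.choose t : ℚ) * ((c - t).choose k : ℚ) = 0 := by
  have h := congrArg (fun p => Polynomial.coeff p k) (polyA m c hmc)
  simp only [Polynomial.finset_sum_coeff, Polynomial.coeff_C_mul,
    Polynomial.coeff_one_add_X_pow] at h
  rw [mul_comm (Polynomial.X ^ m) _, Polynomial.coeff_mul_X_pow'] at h
  rw [if_neg (by omega)] at h
  simpa using h

lemma keyNum (j n : ℕ) (hn : j ≤ n) :
    ∑ s ∈ Finset.range (n+1),
      (-1:ℚ)^s * ((n+1).choose (s+1) : ℚ) * ((n+1-s+j).choose j : ℚ)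
    = ((n+2+j).choose j : ℚ) := by
  have h := lemB (n+1) (n+2+j) j (by omega) (by omega)
  rw [Finset.sum_range_succ'] at h
  simp only [pow_zero, Nat.choose_zero_right, Nat.cast_one, one_mul, Nat.sub_zero] at h
  have h2 : ∑ s ∈ Finset.range (n+1),
      (-1:ℚ)^(s+1) * ((n+1).choose (s+1) : ℚ) * ((n+2+j-(s+1)).choose j : ℚ)
      = - ∑ s ∈ Finset.range (n+1),
      (-1:ℚ)^s * ((n+1).choose (s+1) : ℚ) * ((n+1-s+j).choose j : ℚ) := by
    rw [← Finset.sum_neg_distrib]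
    apply Finset.sum_congr rfl
    intro s hs
    simp only [Finset.mem_range] at hs
    have : n+2+j-(s+1) = n+1-s+j := by omega
    rw [this, pow_succ]
    ring
  rw [h2] at h
  linarith

/-- **The intermediate cases of the master binomial identity.** For all `j ≥ 1` and `n ≥ j`:
`∑_{s=0}^{n} (-1)^s (n+1-s+j)! / ((n+1-s)!·(s+1)!·(n-s)!) = (n+2+j)! / ((n+1)!·(n+2)!)`. -/
theorem binomial_identity_intermediate (j n : ℕ) (hj : 1 ≤ j) (hn : j ≤ n) :
    ∑ s ∈ Finset.range (n + 1),
      (-1 : ℚ) ^ s * ((n + 1 - s + j).factorial : ℚ) /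
        (((n + 1 - s).factorial : ℚ) * ((s + 1).factorial : ℚ) * ((n - s).factorial : ℚ))
      = ((n + 2 + j).factorial : ℚ) / (((n + 1).factorial : ℚ) * ((n + 2).factorial : ℚ)) := by
  have key := keyNum j n hn
  have hjf : (j.factorial : ℚ) ≠ 0 := by exact_mod_cast j.factorial_ne_zero
  have hn1 : ((n+1).factorial : ℚ) ≠ 0 := by exact_mod_cast (n+1).factorial_ne_zero
  have step : ∑ s ∈ Finset.range (n + 1),
      (-1 : ℚ) ^ s * ((n + 1 - s + j).factorial : ℚ) /
        (((n + 1 - s).factorial : ℚ) * ((s + 1).factorial : ℚ) * ((n - s).factorial : ℚ))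
      = (∑ s ∈ Finset.range (n+1),
          (-1:ℚ)^s * ((n+1).choose (s+1) : ℚ) * ((n+1-s+j).choose j : ℚ))
        * ((j.factorial : ℚ) / ((n+1).factorial : ℚ)) := by
    rw [Finset.sum_mul]
    apply Finset.sum_congr rfl
    intro s hs
    simp only [Finset.mem_range] at hs
    rw [Nat.cast_choose ℚ (show s+1 ≤ n+1 by omega),
        Nat.cast_choose ℚ (show j ≤ n+1-s+j by omega)]
    have e1 : n+1-(s+1) = n-s := by omega
    have e2 : n+1-s+j-j = n+1-s := by omega
    rw [e1, e2]
    have f1 : (((n+1-s).factorial : ℚ)) ≠ 0 := by exact_mod_cast (n+1-s).factorial_ne_zero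
    have f2 : (((s+1).factorial : ℚ)) ≠ 0 := by exact_mod_cast (s+1).factorial_ne_zero
    have f3 : (((n-s).factorial : ℚ)) ≠ 0 := by exact_mod_cast (n-s).factorial_ne_zero
    field_simp
  rw [step, key, Nat.cast_choose ℚ (show j ≤ n+2+j by omega)]
  have e3 : n+2+j-j = n+2 := by omega
  rw [e3]
  have f4 : (((n+2).factorial : ℚ)) ≠ 0 := by exact_mod_cast (n+2).factorial_ne_zero
  field_simp
end

section
/- For all integers j ≥ 1 and n ≥ j, setting g(n,j) := ∑_{s=0}^{n} (-1)^s · (n+1-s+j)! / ((n+1-s)! · (s+1)! · (n-s)!), the recurrence (n+1-j)·g(n,j) + (n² + 5n + 6)·g(n+1,j) = 2·(n+2+j)! / ((n+1)!)² holds. -/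
open Finset

/-- **Zeilberger recurrence for
`g(n,j) = ∑_{s=0}^{n} (-1)^s (n+1-s+j)! / ((n+1-s)!·(s+1)!·(n-s)!)`.**
For all `j ≥ 1` and `n ≥ j`:
`(n+1-j)·g(n,j) + (n²+5n+6)·g(n+1,j) = 2·(n+2+j)! / ((n+1)!)²`. -/
theorem zeilberger_recurrence_g (j : ℕ) (g : ℕ → ℚ)
    (hg : ∀ N : ℕ, g N = ∑ s ∈ Finset.range (N + 1),
      (-1 : ℚ) ^ s * ((N + 1 - s + j).factorial : ℚ) /
        (((N + 1 - s).factorial : ℚ) * ((s + 1).factorial : ℚ) * ((N - s).factorial : ℚ)))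
    (n : ℕ) (hj : 1 ≤ j) (hn : j ≤ n) :
    ((n : ℚ) + 1 - (j : ℚ)) * g n + ((n : ℚ) ^ 2 + 5 * (n : ℚ) + 6) * g (n + 1)
      = 2 * ((n + 2 + j).factorial : ℚ) / ((n + 1).factorial : ℚ) ^ 2 := by
  set c : ℚ := (n : ℚ) ^ 2 + 5 * (n : ℚ) + 6 with hc
  set F : ℕ → ℚ := fun s => (-1 : ℚ) ^ s * ((n + 2 - s + j).factorial : ℚ) /
      (((n + 2 - s).factorial : ℚ) * ((s + 1).factorial : ℚ) * ((n + 1 - s).factorial : ℚ))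
    with hF
  set G : ℕ → ℚ := fun s => ((s : ℚ) + 1) * (2 * (n : ℚ) + 4 - (s : ℚ)) * F s with hG
  have key : ∀ s ∈ Finset.range (n + 1),
      ((n : ℚ) + 1 - (j : ℚ)) * ((-1 : ℚ) ^ s * ((n + 1 - s + j).factorial : ℚ) /
        (((n + 1 - s).factorial : ℚ) * ((s + 1).factorial : ℚ) * ((n - s).factorial : ℚ)))
        + c * F s = G s - G (s + 1) := by
    intro s hs
    rw [Finset.mem_range] at hs
    obtain ⟨a, rfl⟩ : ∃ a, n = s + a := ⟨n - s, by omega⟩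
    simp only [hG, hF, hc]
    have e1 : s + a + 1 - s + j = a + 1 + j := by omega
    have e2 : s + a + 1 - s = a + 1 := by omega
    have e3 : s + a - s = a := by omega
    have e4 : s + a + 2 - s + j = (a + 1 + j) + 1 := by omega
    have e5 : s + a + 2 - s = (a + 1) + 1 := by omega
    have e6 : s + a + 1 - s = a + 1 := by omega
    have e7 : s + a + 2 - (s + 1) + j = a + 1 + j := by omega
    have e8 : s + a + 2 - (s + 1) = a + 1 := by omega
    have e9 : s + a + 1 - (s + 1) = a := by omega
    rw [e1, e2, e3, e4, e5, e7, e8, e9]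
    rw [Nat.factorial_succ (a + 1 + j), Nat.factorial_succ (a + 1),
      Nat.factorial_succ a, Nat.factorial_succ (s + 1), Nat.factorial_succ s]
    have h1 : ((a + 1 + j).factorial : ℚ) ≠ 0 := Nat.cast_ne_zero.mpr (Nat.factorial_ne_zero _)
    have h2 : (a.factorial : ℚ) ≠ 0 := Nat.cast_ne_zero.mpr (Nat.factorial_ne_zero _)
    have h3 : (s.factorial : ℚ) ≠ 0 := Nat.cast_ne_zero.mpr (Nat.factorial_ne_zero _)
    have h4 : ((a : ℚ) + 1) ≠ 0 := by positivity
    have h5 : ((a : ℚ) + 2) ≠ 0 := by positivity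
    have h6 : ((s : ℚ) + 1) ≠ 0 := by positivity
    have h7 : ((s : ℚ) + 2) ≠ 0 := by positivity
    push_cast
    rw [pow_succ]
    field_simp
    ring
  rw [hg n, hg (n + 1)]
  rw [Finset.mul_sum, Finset.mul_sum]
  have hsplit : ∑ s ∈ Finset.range (n + 1 + 1), c * ((-1 : ℚ) ^ s *
      ((n + 1 + 1 - s + j).factorial : ℚ) / (((n + 1 + 1 - s).factorial : ℚ) *
        ((s + 1).factorial : ℚ) * ((n + 1 - s).factorial : ℚ)))
      = (∑ s ∈ Finset.range (n + 1), c * F s) + c * F (n + 1) := by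
    rw [Finset.sum_range_succ]
  rw [hsplit, ← add_assoc, ← Finset.sum_add_distrib]
  rw [Finset.sum_congr rfl key, Finset.sum_range_sub']
  have hGn : G (n + 1) = c * F (n + 1) := by
    simp only [hG, hc]
    push_cast
    ring
  rw [hGn]
  have hG0 : G 0 = 2 * ((n + 2 + j).factorial : ℚ) / ((n + 1).factorial : ℚ) ^ 2 := by
    simp only [hG, hF]
    have e1 : n + 2 - 0 + j = n + 2 + j := by omega
    have e2 : n + 2 - 0 = (n + 1) + 1 := by omega
    have e3 : n + 1 - 0 = n + 1 := by omega
    rw [e1, e2, e3, Nat.factorial_succ (n + 1)]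
    have h1 : ((n + 1).factorial : ℚ) ≠ 0 := Nat.cast_ne_zero.mpr (Nat.factorial_ne_zero _)
    have h2 : ((n : ℚ) + 2) ≠ 0 := by positivity
    push_cast
    field_simp
    ring
  rw [← hG0]
  ring
end
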